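/- Let n be an integer with n ≥ 4 and let a be a real number such that g_n(a;x) ≥ 0 for all x ∈ [−1,1]. Then a ≤ 1/(1 + cos(π/n)) when n is even, and a ≤ 1/(1 + cos(2π/n)) when n is odd. Specifically, at the points x_k = cos(kπ/n) (the zeros of T_n′) one has g_n(a; x_k) = 2 + (−1)^k − a·(1 − x_k), and applying this with k = n−1 for even n and k = n−2 for odd n yields the stated bounds. -/

import Mathlib

open Polynomial Real

/-- The `n`-th Chebyshev polynomial of the first kind, as a real polynomial. -/
noncomputable def chebT (n : ℕ) : Polynomial ℝ := Polynomial.Chebyshev.T ℝ (n : ℤ)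

/-- `g n a x = T_n(x) + 2 - ((x+2)/n²) T_n'(x) - a ((1-x)/n²) (n² - T_n'(x))`. -/
noncomputable def g (n : ℕ) (a x : ℝ) : ℝ :=
  (chebT n).eval x + 2 - (x + 2) / (n : ℝ) ^ 2 * (derivative (chebT n)).eval x
    - a * ((1 - x) / (n : ℝ) ^ 2) * ((n : ℝ) ^ 2 - (derivative (chebT n)).eval x)

lemma deriv_chebT_eval_zero (n : ℕ) (θ : ℝ) (h : Real.sin θ ≠ 0)
    (h2 : Real.sin ((n : ℝ) * θ) = 0) : (derivative (chebT n)).eval (Real.cos θ) = 0 := by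
  have hd := Polynomial.Chebyshev.T_derivative_eq_U (R := ℝ) (n : ℤ)
  have hU := Polynomial.Chebyshev.U_real_cos θ ((n : ℤ) - 1)
  have hc : ((((n:ℤ) - 1 : ℤ) : ℝ) + 1) = (n : ℝ) := by push_cast; ring
  rw [hc, h2] at hU
  have hU0 : (Polynomial.Chebyshev.U ℝ ((n:ℤ) - 1)).eval (Real.cos θ) = 0 := by
    rcases mul_eq_zero.mp hU with h' | h'
    · exact h'
    · exact absurd h' h
  unfold chebT
  rw [hd]
  simp [hU0]

/-- Upper bounds on admissible `a`: if `n ≥ 4` and `g n a x ≥ 0` on `[-1,1]`, then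
`a ≤ 1/(1+cos(π/n))` for even `n` and `a ≤ 1/(1+cos(2π/n))` for odd `n`.
Moreover, at the zeros `x_k = cos(kπ/n)` of `T_n'` one has
`g n a x_k = 2 + (-1)^k - a (1 - x_k)`. -/
theorem upper_bound_on_a (n : ℕ) (hn : 4 ≤ n) (a : ℝ)
    (hg : ∀ x ∈ Set.Icc (-1 : ℝ) 1, 0 ≤ g n a x) :
    (∀ k : ℕ, 1 ≤ k → k ≤ n - 1 →
        g n a (Real.cos (k * π / n)) = 2 + (-1 : ℝ) ^ k - a * (1 - Real.cos (k * π / n))) ∧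
    (Even n → a ≤ 1 / (1 + Real.cos (π / n))) ∧
    (Odd n → a ≤ 1 / (1 + Real.cos (2 * π / n))) := by
  have hn0 : (n : ℝ) ≠ 0 := by positivity
  have hnpos : (0:ℝ) < n := by positivity
  have key : ∀ k : ℕ, 1 ≤ k → k ≤ n - 1 →
      g n a (Real.cos (k * π / n)) = 2 + (-1 : ℝ) ^ k - a * (1 - Real.cos (k * π / n)) := by
    intro k hk1 hk2
    set θ : ℝ := k * π / n with hθ
    have hnθ : (n : ℝ) * θ = k * π := by rw [hθ]; field_simp
    have hθpos : 0 < θ := by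
      apply div_pos (by positivity) hnpos
    have hθlt : θ < π := by
      rw [hθ, div_lt_iff₀ hnpos]
      have : (k:ℝ) < n := by
        exact_mod_cast Nat.lt_of_le_of_lt hk2 (Nat.sub_lt (by omega) one_pos)
      nlinarith [Real.pi_pos]
    have hsin : Real.sin θ ≠ 0 := ne_of_gt (Real.sin_pos_of_pos_of_lt_pi hθpos hθlt)
    have hsin2 : Real.sin ((n:ℝ) * θ) = 0 := by
      rw [hnθ, Real.sin_nat_mul_pi]
    have hder := deriv_chebT_eval_zero n θ hsin hsin2
    have hT : (chebT n).eval (Real.cos θ) = (-1 : ℝ) ^ k := by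
      unfold chebT
      rw [Polynomial.Chebyshev.T_real_cos]
      push_cast
      rw [hnθ, show (k:ℝ)*π = 0 + k*π by ring, Real.cos_add_nat_mul_pi]
      simp
    rw [g, hder, hT]
    field_simp
    ring
  refine ⟨key, ?_, ?_⟩
  · intro heven
    have hk := key (n-1) (by omega) (le_refl _)
    have hcast : ((n - 1 : ℕ) : ℝ) = (n : ℝ) - 1 := by
      push_cast [Nat.cast_sub (by omega : 1 ≤ n)]; ring
    have hang : ((n-1 : ℕ) : ℝ) * π / n = π - π / n := by
      rw [hcast]; field_simp
    have hcos : Real.cos (((n-1:ℕ):ℝ) * π / n) = -Real.cos (π / n) := by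
      rw [hang, Real.cos_pi_sub]
    have hpow : (-1 : ℝ) ^ (n-1) = -1 := Odd.neg_one_pow (Nat.Even.sub_odd (by omega) heven odd_one)
    have hge := hg (Real.cos (((n-1:ℕ):ℝ) * π / n))
      ⟨Real.neg_one_le_cos _, Real.cos_le_one _⟩
    rw [hk, hpow, hcos] at hge
    have hcpos : 0 < 1 + Real.cos (π / n) := by
      have : 0 < Real.cos (π / n) := by
        apply Real.cos_pos_of_mem_Ioo
        constructor
        · linarith [Real.pi_pos, div_pos Real.pi_pos hnpos]
        · rw [div_lt_iff₀ hnpos]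
          nlinarith [Real.pi_pos, (by exact_mod_cast hn : (4:ℝ) ≤ n),
            mul_le_mul_of_nonneg_left (by exact_mod_cast hn : (4:ℝ) ≤ n) (le_of_lt (half_pos Real.pi_pos))]
      linarith
    rw [le_div_iff₀ hcpos]
    linarith
  · intro hodd
    have hk := key (n-2) (by omega) (by omega)
    have hcast : ((n - 2 : ℕ) : ℝ) = (n : ℝ) - 2 := by
      push_cast [Nat.cast_sub (by omega : 2 ≤ n)]; ring
    have hang : ((n-2 : ℕ) : ℝ) * π / n = π - 2 * π / n := by
      rw [hcast]; field_simp
    have hcos : Real.cos (((n-2:ℕ):ℝ) * π / n) = -Real.cos (2 * π / n) := by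
      rw [hang, Real.cos_pi_sub]
    have hpow : (-1 : ℝ) ^ (n-2) = -1 := by
      have : Odd (n - 2) := by
        rcases hodd with ⟨m, hm⟩
        exact ⟨m - 1, by omega⟩
      exact Odd.neg_one_pow this
    have hge := hg (Real.cos (((n-2:ℕ):ℝ) * π / n))
      ⟨Real.neg_one_le_cos _, Real.cos_le_one _⟩
    rw [hk, hpow, hcos] at hge
    have hcpos : 0 < 1 + Real.cos (2 * π / n) := by
      have : 0 < Real.cos (2 * π / n) := by
        apply Real.cos_pos_of_mem_Ioo
        constructor
        · have h1 : (0:ℝ) < 2 * π / n := by positivity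
          linarith [Real.pi_pos]
        · rw [div_lt_iff₀ hnpos]
          have hn5 : (5:ℝ) ≤ n := by
            have : 5 ≤ n := by rcases hodd with ⟨m, hm⟩; omega
            exact_mod_cast this
          nlinarith [Real.pi_pos,
            mul_le_mul_of_nonneg_left hn5 (le_of_lt (half_pos Real.pi_pos))]
      linarith
    rw [le_div_iff₀ hcpos]
    linarith
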